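/- Monotone worst-case services compose into a worst-case service: if ψ^I: U↑b^I → U and ψ^{II}: U↑b^{II} → U are worst-case services (ψ(x) ≤ x) and ψ^{II} is monotone, then ψ(q) := ψ^{II}(ψ^I(q − b^{II}δ) + b^{II}δ) satisfies ψ(q) ≤ q for all q ∈ U↑(b^I + b^{II}); if additionally ψ^I is monotone, then ψ is monotone. -/

import Mathlib

/-- A cumulative vector: a nondecreasing sequence `ℕ → ℕ∞` starting at `0`. -/
def Cumulative (x : ℕ → ℕ∞) : Prop := x 0 = 0 ∧ Monotone x

/-- `U↑b`: cumulative vectors whose first entry is at least `b`. -/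
def UUp (b : ℕ) : Set (ℕ → ℕ∞) := {x | Cumulative x ∧ (b : ℕ∞) ≤ x 1}

/-- The vector `bδ`: `0` at index `0` and `b` elsewhere. -/
def bDelta (b : ℕ) : ℕ → ℕ∞ := fun k => if k = 0 then 0 else (b : ℕ∞)

/-- The composition `ψ(q) = ψ^{II}(ψ^I(q − b^{II}δ) + b^{II}δ)`. -/
noncomputable def compServ (bII : ℕ) (ψI ψII : (ℕ → ℕ∞) → (ℕ → ℕ∞)) :
    (ℕ → ℕ∞) → (ℕ → ℕ∞) := fun q =>
  ψII (fun k => ψI (fun l => q l - bDelta bII l) k + bDelta bII k)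

/-- Monotone worst-case services compose into a worst-case service, and the
composition of monotone services is monotone. -/
theorem compose_worst_case (bI bII : ℕ) (ψI ψII : (ℕ → ℕ∞) → (ℕ → ℕ∞))
    (hI : ∀ x ∈ UUp bI, ∀ j, ψI x j ≤ x j)
    (hIcum : ∀ x ∈ UUp bI, Cumulative (ψI x))
    (hII : ∀ x ∈ UUp bII, ∀ j, ψII x j ≤ x j)
    (hIIcum : ∀ x ∈ UUp bII, Cumulative (ψII x))
    (hIImono : ∀ x ∈ UUp bII, ∀ x' ∈ UUp bII,
      (∀ k, x' k ≤ x k) → ∀ j, ψII x' j ≤ ψII x j) :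
    (∀ q ∈ UUp (bI + bII), ∀ j, compServ bII ψI ψII q j ≤ q j) ∧
    ((∀ x ∈ UUp bI, ∀ x' ∈ UUp bI,
        (∀ k, x' k ≤ x k) → ∀ j, ψI x' j ≤ ψI x j) →
      ∀ q ∈ UUp (bI + bII), ∀ q' ∈ UUp (bI + bII),
        (∀ k, q' k ≤ q k) → ∀ j, compServ bII ψI ψII q' j ≤ compServ bII ψI ψII q j) := by
  -- bII ≤ q j for j ≠ 0
  have hqge : ∀ q ∈ UUp (bI + bII), ∀ j, j ≠ 0 → (bII : ℕ∞) ≤ q j := by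
    rintro q ⟨⟨h0, hmono⟩, h1⟩ j hj
    calc (bII : ℕ∞) ≤ ((bI + bII : ℕ) : ℕ∞) := by exact_mod_cast Nat.le_add_left _ _
      _ ≤ q 1 := h1
      _ ≤ q j := hmono (Nat.one_le_iff_ne_zero.mpr hj)
  -- q - bII δ ∈ UUp bI
  have hx : ∀ q ∈ UUp (bI + bII), (fun l => q l - bDelta bII l) ∈ UUp bI := by
    rintro q hq
    obtain ⟨⟨h0, hmono⟩, h1⟩ := hq
    refine ⟨⟨by simp [bDelta, h0], ?_⟩, ?_⟩
    · intro k l hkl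
      rcases Nat.eq_zero_or_pos k with rfl | hk
      · simp [bDelta, h0]
      · have hk' : k ≠ 0 := hk.ne'
        have hl' : l ≠ 0 := by omega
        simp only [bDelta, if_neg hk', if_neg hl']
        exact tsub_le_tsub_right (hmono hkl) _
    · simp only [bDelta, if_neg one_ne_zero]
      refine ENat.le_sub_of_add_le_left (by simp) ?_
      calc ((bII : ℕ∞) + bI) = ((bI + bII : ℕ) : ℕ∞) := by push_cast; ring
        _ ≤ q 1 := h1
  -- y := ψI (q - bII δ) + bII δ ∈ UUp bII
  have hy : ∀ q ∈ UUp (bI + bII),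
      (fun k => ψI (fun l => q l - bDelta bII l) k + bDelta bII k) ∈ UUp bII := by
    intro q hq
    obtain ⟨hc0, hcmono⟩ := hIcum _ (hx q hq)
    refine ⟨⟨?_, ?_⟩, ?_⟩
    · show ψI (fun l => q l - bDelta bII l) 0 + bDelta bII 0 = 0
      rw [hc0]; simp [bDelta]
    · intro k l hkl
      rcases Nat.eq_zero_or_pos k with rfl | hk
      · show ψI (fun l => q l - bDelta bII l) 0 + bDelta bII 0 ≤ _
        rw [hc0]; simpa [bDelta] using zero_le _
      · have hk' : k ≠ 0 := hk.ne'
        have hl' : l ≠ 0 := by omega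
        simp only [bDelta, if_neg hk', if_neg hl']
        exact add_le_add_left (hcmono hkl) _
    · show (bII : ℕ∞) ≤ ψI (fun l => q l - bDelta bII l) 1 + bDelta bII 1
      simp only [bDelta, if_neg one_ne_zero]
      exact le_add_self
  -- y ≤ q
  have hyle : ∀ q ∈ UUp (bI + bII), ∀ j,
      ψI (fun l => q l - bDelta bII l) j + bDelta bII j ≤ q j := by
    intro q hq j
    rcases Nat.eq_zero_or_pos j with rfl | hj
    · show ψI (fun l => q l - bDelta bII l) 0 + bDelta bII 0 ≤ q 0
      rw [(hIcum _ (hx q hq)).1]; simpa [bDelta] using zero_le _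
    · have hj' : j ≠ 0 := hj.ne'
      have h1 := hI _ (hx q hq) j
      calc ψI (fun l => q l - bDelta bII l) j + bDelta bII j
          ≤ (q j - bDelta bII j) + bDelta bII j := add_le_add_left h1 _
        _ = q j := by
            simp only [bDelta, if_neg hj']
            exact tsub_add_cancel_of_le (hqge q hq j hj')
  constructor
  · intro q hq j
    calc compServ bII ψI ψII q j
        ≤ ψI (fun l => q l - bDelta bII l) j + bDelta bII j := hII _ (hy q hq) j
      _ ≤ q j := hyle q hq j
  · intro hImono q hq q' hq' hle j
    refine hIImono _ (hy q hq) _ (hy q' hq') ?_ j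
    intro k
    refine add_le_add_left ?_ _
    refine hImono _ (hx q hq) _ (hx q' hq') ?_ k
    intro l
    exact tsub_le_tsub_right (hle l) _
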